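/- Let V be a 𝔤-module with action ρ, where 𝔤 = 𝔰𝔳(0). Then for every m ∈ ℤ, every polynomial u ∈ ℂ[x,y,z] and every w ∈ V: ρ(Y_m)( u(ρ(L₀),ρ(M₀),ρ(Y₀))·w ) = u(ρ(L₀)−m·id, ρ(M₀), ρ(Y₀))·( ρ(Y_m)·w ) − m·(∂u/∂z)(ρ(L₀)−m·id, ρ(M₀), ρ(Y₀))·( ρ(M_m)·w ). Here u(A,B,C) denotes the operator obtained by substituting the pairwise commuting operators A, B, C for x, y, z in u, and ∂u/∂z is the formal partial derivative. -/

import Mathlib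

/-- Evaluation of a polynomial `u(x,y,z)` at three operators `A, B, C`, applied to a
vector `w`: `u(A,B,C)·w` (when `A,B,C` pairwise commute, this is the usual substitution). -/
noncomputable def evalP {V : Type*} [AddCommGroup V] [Module ℂ V]
    (A B C : Module.End ℂ V) (w : V) (u : MvPolynomial (Fin 3) ℂ) : V :=
  (AddMonoidAlgebra.coeff u).sum fun d c => c • ((A ^ d 0 * B ^ d 1 * C ^ d 2) w)

open MvPolynomial

private lemma semiconj_pow' {R : Type*} [Ring R] {T A A' : R} (h : T * A = A' * T) :
    ∀ n : ℕ, T * A ^ n = A' ^ n * T := by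
  intro n
  induction n with
  | zero => simp
  | succ n ih => rw [pow_succ, ← mul_assoc, ih, mul_assoc, h, ← mul_assoc, ← pow_succ]

private lemma tc_pow {R : Type*} [Ring R] [Algebra ℂ R] {T C S : R} {μ : ℂ}
    (h : T * C = C * T - μ • S) (hCS : C * S = S * C) (c : ℕ) :
    T * C ^ c = C ^ c * T - (μ * c) • (C ^ (c - 1) * S) := by
  have key : ∀ c : ℕ, T * C ^ (c + 1) = C ^ (c + 1) * T - (μ * (c + 1)) • (C ^ c * S) := by
    intro c
    induction c with
    | zero => simpa using h
    | succ c ih =>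
      have e1 : T * C ^ (c + 1 + 1) = (C ^ (c + 1) * T - (μ * (c + 1)) • (C ^ c * S)) * C := by
        rw [pow_succ, ← mul_assoc, ih]
      rw [e1, sub_mul, mul_assoc, h, smul_mul_assoc, mul_assoc, ← hCS, ← mul_assoc,
        ← pow_succ, mul_sub, mul_smul_comm, sub_sub, ← mul_assoc, ← pow_succ]
      congr 1
      rw [← add_smul]
      congr 1
      push_cast
      ring
  cases c with
  | zero => simp
  | succ c => simpa using key c

private lemma main_op {R : Type*} [Ring R] [Algebra ℂ R] {T S A A' B C : R} {μ : ℂ}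
    (hTA : T * A = A' * T) (hTB : T * B = B * T) (hTC : T * C = C * T - μ • S)
    (hCS : C * S = S * C) (a b c : ℕ) :
    T * (A ^ a * B ^ b * C ^ c)
      = (A' ^ a * B ^ b * C ^ c) * T - (μ * c) • (A' ^ a * B ^ b * C ^ (c - 1) * S) := by
  calc T * (A ^ a * B ^ b * C ^ c) = (T * A ^ a) * B ^ b * C ^ c := by
        rw [mul_assoc, mul_assoc, mul_assoc]
    _ = A' ^ a * (T * B ^ b) * C ^ c := by
        rw [semiconj_pow' hTA, mul_assoc (A' ^ a) T]
    _ = A' ^ a * B ^ b * (T * C ^ c) := by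
        rw [semiconj_pow' hTB, mul_assoc, mul_assoc, mul_assoc]
    _ = A' ^ a * B ^ b * (C ^ c * T - (μ * c) • (C ^ (c - 1) * S)) := by rw [tc_pow hTC hCS]
    _ = _ := by simp [mul_sub, mul_smul_comm, mul_assoc]

private lemma evalP_add {V : Type*} [AddCommGroup V] [Module ℂ V]
    (A B C : Module.End ℂ V) (w : V) (p q : MvPolynomial (Fin 3) ℂ) :
    evalP A B C w (p + q) = evalP A B C w p + evalP A B C w q :=
  by unfold evalP; rw [AddMonoidAlgebra.coeff_add]; exact Finsupp.sum_add_index' (by simp) (by intros; rw [add_smul])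

private lemma evalP_monomial {V : Type*} [AddCommGroup V] [Module ℂ V]
    (A B C : Module.End ℂ V) (w : V) (d : Fin 3 →₀ ℕ) (c : ℂ) :
    evalP A B C w (monomial d c) = c • ((A ^ d 0 * B ^ d 1 * C ^ d 2) w) :=
  by unfold evalP; exact sum_monomial_eq (by simp)


/-- For any `𝔰𝔳(0)`-module `V`, any `m ∈ ℤ`, `u ∈ ℂ[x,y,z]` and `w ∈ V`:
`ρ(Y_m)(u(ρL₀,ρM₀,ρY₀)·w) = u(ρL₀ − m·id, ρM₀, ρY₀)·(ρ(Y_m)·w)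
  − m·(∂u/∂z)(ρL₀ − m·id, ρM₀, ρY₀)·(ρ(M_m)·w)`. -/
theorem stmt11
    -- `𝔤 = 𝔰𝔳(0)`: a complex Lie algebra with basis `{L n, M n, Y n : n ∈ ℤ}` ...
    (g : Type*) [LieRing g] [LieAlgebra ℂ g] (L M Y : ℤ → g)
    (B : Module.Basis (Fin 3 × ℤ) ℂ g)
    (hB : ∀ n : ℤ, B (0, n) = L n ∧ B (1, n) = M n ∧ B (2, n) = Y n)
    -- ... and the following brackets:
    (hLL : ∀ n m : ℤ, ⁅L n, L m⁆ = (((m : ℂ) - (n : ℂ))) • L (m + n))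
    (hLY : ∀ n m : ℤ, ⁅L n, Y m⁆ = ((m : ℂ) - (n : ℂ) / 2) • Y (m + n))
    (hLM : ∀ n m : ℤ, ⁅L n, M m⁆ = (m : ℂ) • M (m + n))
    (hYY : ∀ n m : ℤ, ⁅Y n, Y m⁆ = (((m : ℂ) - (n : ℂ))) • M (m + n))
    (hYM : ∀ n m : ℤ, ⁅Y n, M m⁆ = 0)
    (hMM : ∀ n m : ℤ, ⁅M n, M m⁆ = 0)
    -- a `𝔤`-module `V`:
    (V : Type*) [AddCommGroup V] [Module ℂ V] [LieRingModule g V] [LieModule ℂ g V]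
    (m : ℤ) (u : MvPolynomial (Fin 3) ℂ) (w : V) :
    ⁅Y m, evalP (LieModule.toEnd ℂ g V (L 0)) (LieModule.toEnd ℂ g V (M 0))
        (LieModule.toEnd ℂ g V (Y 0)) w u⁆ =
      evalP (LieModule.toEnd ℂ g V (L 0) - (m : ℂ) • 1) (LieModule.toEnd ℂ g V (M 0))
        (LieModule.toEnd ℂ g V (Y 0)) ⁅Y m, w⁆ u
      - (m : ℂ) • evalP (LieModule.toEnd ℂ g V (L 0) - (m : ℂ) • 1)
          (LieModule.toEnd ℂ g V (M 0)) (LieModule.toEnd ℂ g V (Y 0)) ⁅M m, w⁆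
          (MvPolynomial.pderiv (2 : Fin 3) u) := by
  set ρ := LieModule.toEnd ℂ g V with hρ
  have key : ∀ a b : g, ρ a * ρ b - ρ b * ρ a = ρ ⁅a, b⁆ := by
    intro a b
    letI : LieRing (Module.End ℂ V) := LieRing.ofAssociativeRing
    rw [LieHom.map_lie, Ring.lie_def]
  have hTA : ρ (Y m) * ρ (L 0) = (ρ (L 0) - (m : ℂ) • 1) * ρ (Y m) := by
    have h := key (L 0) (Y m)
    rw [hLY 0 m] at h
    norm_num [map_smul] at h
    rw [sub_mul, smul_mul_assoc, one_mul, ← h]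
    abel
  have hSA : ρ (M m) * ρ (L 0) = (ρ (L 0) - (m : ℂ) • 1) * ρ (M m) := by
    have h := key (L 0) (M m)
    rw [hLM 0 m] at h
    norm_num [map_smul] at h
    rw [sub_mul, smul_mul_assoc, one_mul, ← h]
    abel
  have hTB : ρ (Y m) * ρ (M 0) = ρ (M 0) * ρ (Y m) := by
    have h := key (Y m) (M 0)
    rw [hYM m 0] at h
    rw [map_zero, sub_eq_zero] at h
    exact h
  have hTC : ρ (Y m) * ρ (Y 0) = ρ (Y 0) * ρ (Y m) - (m : ℂ) • ρ (M m) := by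
    have h := key (Y m) (Y 0)
    rw [hYY m 0] at h
    norm_num [map_smul] at h
    rw [sub_eq_iff_eq_add] at h
    rw [h]
    abel
  have hCS : ρ (Y 0) * ρ (M m) = ρ (M m) * ρ (Y 0) := by
    have h := key (Y 0) (M m)
    rw [hYM 0 m, map_zero, sub_eq_zero] at h
    exact h
  have hbr : ∀ (x : g) (v : V), ⁅x, v⁆ = ρ x v := fun x v => rfl
  induction u using MvPolynomial.induction_on' with
  | add p q hp hq =>
    rw [evalP_add, map_add, evalP_add, evalP_add, lie_add, hp, hq, smul_add]
    abel
  | monomial d c =>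
    rw [evalP_monomial, pderiv_monomial, evalP_monomial, evalP_monomial]
    have hd0 : (d - Finsupp.single (2 : Fin 3) (1 : ℕ)) (0 : Fin 3) = d 0 := by
      simp [Finsupp.tsub_apply, Finsupp.single_apply]
    have hd1 : (d - Finsupp.single (2 : Fin 3) (1 : ℕ)) (1 : Fin 3) = d 1 := by
      simp [Finsupp.tsub_apply, Finsupp.single_apply]
    have hd2 : (d - Finsupp.single (2 : Fin 3) (1 : ℕ)) (2 : Fin 3) = d 2 - 1 := by
      simp [Finsupp.tsub_apply, Finsupp.single_apply]
    rw [hd0, hd1, hd2, hbr (Y m), hbr (Y m), hbr (M m), map_smul]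
    have hop := main_op hTA hTB hTC hCS (d 0) (d 1) (d 2)
    have := congrArg (fun (f : Module.End ℂ V) => f w) hop
    simp only [Module.End.mul_apply, LinearMap.sub_apply, LinearMap.smul_apply] at this ⊢
    rw [this, smul_sub, smul_smul, smul_smul]
    ring_nf
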